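/- With S, G, f, H as above, the relation on the left coset space G/H defined by σH ≤ τH iff f(σ,σ⁻¹τ) ∈ U(S) is well-defined (independent of coset representatives) and is a partial order on G/H with least element H. -/

import Mathlib

/-- The relation `σH ≤ τH ↔ f(σ,σ⁻¹τ) ∈ U(S)` on the left coset space `G/H`
(where `H = {σ | f(σ,σ⁻¹) ∈ U(S)}`) is well defined and is a partial order with
least element `H`. -/
theorem graph_partial_order {S : Type*} [CommRing S] [IsDomain S] {G : Type*} [Group G]
    [Finite G] [MulSemiringAction G S] (f : G → G → S)
    (hne : ∀ σ τ : G, f σ τ ≠ 0)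
    (hnorm₁ : ∀ σ : G, f 1 σ = 1) (hnorm₂ : ∀ σ : G, f σ 1 = 1)
    (hcoc : ∀ σ τ γ : G, f σ τ * f (σ * τ) γ = (σ • f τ γ) * f σ (τ * γ)) :
    -- well-definedness: the relation only depends on the left cosets modulo H
    (∀ σ σ' τ τ' : G, IsUnit (f (σ⁻¹ * σ') (σ⁻¹ * σ')⁻¹) →
      IsUnit (f (τ⁻¹ * τ') (τ⁻¹ * τ')⁻¹) →
      (IsUnit (f σ (σ⁻¹ * τ)) ↔ IsUnit (f σ' (σ'⁻¹ * τ')))) ∧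
    -- reflexivity
    (∀ σ : G, IsUnit (f σ (σ⁻¹ * σ))) ∧
    -- transitivity
    (∀ σ τ γ : G, IsUnit (f σ (σ⁻¹ * τ)) → IsUnit (f τ (τ⁻¹ * γ)) →
      IsUnit (f σ (σ⁻¹ * γ))) ∧
    -- antisymmetry (modulo H: equal cosets)
    (∀ σ τ : G, IsUnit (f σ (σ⁻¹ * τ)) → IsUnit (f τ (τ⁻¹ * σ)) →
      IsUnit (f (σ⁻¹ * τ) (σ⁻¹ * τ)⁻¹)) ∧
    -- H is the least element
    (∀ σ : G, IsUnit (f 1 (1⁻¹ * σ))) := by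
  -- the action of any `σ` preserves units
  have hsmul : ∀ (σ : G) (x : S), IsUnit (σ • x) → IsUnit x := by
    intro σ x h
    have := h.map (MulSemiringAction.toRingHom G S σ⁻¹)
    change IsUnit (σ⁻¹ • σ • x) at this
    simpa [smul_smul] using this
  have hsmul' : ∀ (σ : G) (x : S), IsUnit x → IsUnit (σ • x) := by
    intro σ x h
    exact h.map (MulSemiringAction.toRingHom G S σ)
  -- reflexivity
  have hrefl : ∀ σ : G, IsUnit (f σ (σ⁻¹ * σ)) := by
    intro σ
    rw [inv_mul_cancel, hnorm₂]
    exact isUnit_one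
  -- transitivity
  have htrans : ∀ σ τ γ : G, IsUnit (f σ (σ⁻¹ * τ)) → IsUnit (f τ (τ⁻¹ * γ)) →
      IsUnit (f σ (σ⁻¹ * γ)) := by
    intro σ τ γ h1 h2
    have hc := hcoc σ (σ⁻¹ * τ) (τ⁻¹ * γ)
    rw [show σ * (σ⁻¹ * τ) = τ by group, show σ⁻¹ * τ * (τ⁻¹ * γ) = σ⁻¹ * γ by group] at hc
    exact isUnit_of_mul_isUnit_right (hc ▸ h1.mul h2)
  -- antisymmetry
  have hanti : ∀ σ τ : G, IsUnit (f σ (σ⁻¹ * τ)) → IsUnit (f τ (τ⁻¹ * σ)) →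
      IsUnit (f (σ⁻¹ * τ) (σ⁻¹ * τ)⁻¹) := by
    intro σ τ h1 h2
    have hc := hcoc σ (σ⁻¹ * τ) (τ⁻¹ * σ)
    rw [show σ * (σ⁻¹ * τ) = τ by group, show σ⁻¹ * τ * (τ⁻¹ * σ) = 1 by group, hnorm₂,
      mul_one] at hc
    rw [mul_inv_rev, inv_inv]
    exact hsmul σ _ (hc ▸ h1.mul h2)
  -- key lemma: if `k ∈ H` then `σ ≤ σk` and `σk ≤ σ`
  have hkey : ∀ σ k : G, IsUnit (f k k⁻¹) → IsUnit (f σ k) ∧ IsUnit (f (σ * k) k⁻¹) := by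
    intro σ k hk
    have hc := hcoc σ k k⁻¹
    rw [mul_inv_cancel, hnorm₂, mul_one] at hc
    have hu : IsUnit (f σ k * f (σ * k) k⁻¹) := hc ▸ hsmul' σ _ hk
    exact ⟨isUnit_of_mul_isUnit_left hu, isUnit_of_mul_isUnit_right hu⟩
  -- coset lemma: if `σ⁻¹τ ∈ H` then `σ ≤ τ` and `τ ≤ σ`
  have hL : ∀ σ τ : G, IsUnit (f (σ⁻¹ * τ) (σ⁻¹ * τ)⁻¹) →
      IsUnit (f σ (σ⁻¹ * τ)) ∧ IsUnit (f τ (τ⁻¹ * σ)) := by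
    intro σ τ h
    obtain ⟨h1, h2⟩ := hkey σ (σ⁻¹ * τ) h
    rw [show σ * (σ⁻¹ * τ) = τ by group, mul_inv_rev, inv_inv] at h2
    exact ⟨h1, h2⟩
  refine ⟨?_, hrefl, htrans, hanti, ?_⟩
  · intro σ σ' τ τ' hσ hτ
    obtain ⟨hσ1, hσ2⟩ := hL σ σ' hσ
    obtain ⟨hτ1, hτ2⟩ := hL τ τ' hτ
    exact ⟨fun h => htrans σ' σ τ' hσ2 (htrans σ τ τ' h hτ1),
           fun h => htrans σ σ' τ hσ1 (htrans σ' τ' τ h hτ2)⟩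
  · intro σ
    rw [hnorm₁]
    exact isUnit_one
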